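/- Under the same discrete setting, if additionally the velocity-differentiation matrix D_v satisfies the summation-by-parts identity ⟨D_v u, v⟩ = −⟨u, 1_v⟩ for all u ∈ ℝ^{N_v} vanishing at the velocity boundary, then the discrete current density satisfies J^{n+1,*} = J^n − Δt (D_x σ^n − ρ^n ⋆ E^n), where σ^n = h_v f^n v² is the discrete second moment; i.e., the moment scheme is a consistent conservative discretization of the momentum equation ∂_t J + ∂_x σ = ρE. -/
import Mathlib


/-- Forward-Euler low rank update: under a summation-by-parts identity for D_v
(for vectors vanishing at the velocity boundary), the discrete current density
satisfies J^{n+1,*} = Jⁿ - Δt (D_x σⁿ - ρⁿ ⋆ Eⁿ). -/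
theorem stmt9 (nx nv : ℕ) [NeZero nx] (hv Δt : ℝ)
    (Dx Fx : Matrix (ZMod nx) (ZMod nx) ℝ)
    (hDx : ∀ u i, Dx.mulVec u i = Fx.mulVec u i - Fx.mulVec u (i - 1))
    (Dv : Matrix (Fin (nv + 1)) (Fin (nv + 1)) ℝ)
    (v : Fin (nv + 1) → ℝ) (E : ZMod nx → ℝ)
    (hSBP : ∀ u : Fin (nv + 1) → ℝ, u 0 = 0 → u (Fin.last nv) = 0 →
      hv * ∑ j, Dv.mulVec u j * v j = -(hv * ∑ j, u j * 1))
    (f fnew : Matrix (ZMod nx) (Fin (nv + 1)) ℝ)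
    (hbd : ∀ i, f i 0 = 0 ∧ f i (Fin.last nv) = 0)
    (hfnew : fnew = f - Δt • (Dx * f * Matrix.diagonal v + Matrix.diagonal E * f * Dv.transpose))
    (ρ J Jnew σ : ZMod nx → ℝ)
    (hρ : ρ = fun i => hv * ∑ j, f i j)
    (hJ : J = fun i => hv * ∑ j, f i j * v j)
    (hJnew : Jnew = fun i => hv * ∑ j, fnew i j * v j)
    (hσ : σ = fun i => hv * ∑ j, f i j * (v j) ^ 2) :
    Jnew = fun i => J i - Δt * (Dx.mulVec σ i - ρ i * E i) := by
  subst hfnew hρ hJ hJnew hσ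
  funext i
  have h1 : hv * ∑ j, (Dx * f * Matrix.diagonal v) i j * v j
      = Dx.mulVec (fun k => hv * ∑ j, f k j * v j ^ 2) i := by
    simp only [Matrix.mul_apply, Matrix.diagonal_apply, mul_ite, mul_zero,
      Finset.sum_ite_eq', Finset.mem_univ, if_true, Matrix.mulVec, dotProduct,
      Finset.mul_sum, Finset.sum_mul]
    rw [Finset.sum_comm]
    refine Finset.sum_congr rfl fun k _ => Finset.sum_congr rfl fun j _ => by ring
  have h2 : hv * ∑ j, (Matrix.diagonal E * f * Dv.transpose) i j * v j
      = -(E i * (hv * ∑ j, f i j)) := by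
    have hfirst : ∀ j, (Matrix.diagonal E * f * Dv.transpose) i j
        = E i * Dv.mulVec (f i) j := by
      intro j
      simp only [Matrix.mul_apply, Matrix.transpose_apply, Matrix.diagonal_apply,
        Matrix.mulVec, dotProduct, ite_mul, zero_mul, Finset.sum_ite_eq, Finset.sum_ite_eq',
        Finset.mem_univ, if_true, Finset.mul_sum]
      refine Finset.sum_congr rfl fun k _ => by ring
    simp only [hfirst]
    have hs := hSBP (f i) (hbd i).1 (hbd i).2
    simp only [mul_one] at hs
    calc hv * ∑ j, E i * Dv.mulVec (f i) j * v j
        = E i * (hv * ∑ j, Dv.mulVec (f i) j * v j) := by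
          rw [Finset.mul_sum, Finset.mul_sum, Finset.mul_sum]
          exact Finset.sum_congr rfl fun j _ => by ring
      _ = -(E i * (hv * ∑ j, f i j)) := by rw [hs]; ring
  simp only [Matrix.sub_apply, Matrix.smul_apply, Matrix.add_apply, smul_eq_mul]
  have expand : ∀ j, (f i j - Δt * ((Dx * f * Matrix.diagonal v) i j
      + (Matrix.diagonal E * f * Dv.transpose) i j)) * v j
      = f i j * v j - Δt * ((Dx * f * Matrix.diagonal v) i j * v j
        + (Matrix.diagonal E * f * Dv.transpose) i j * v j) := by intro j; ring
  simp only [expand]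
  rw [Finset.sum_sub_distrib, mul_sub, ← Finset.mul_sum]
  have key : hv * ∑ j, ((Dx * f * Matrix.diagonal v) i j * v j
      + (Matrix.diagonal E * f * Dv.transpose) i j * v j)
      = Dx.mulVec (fun k => hv * ∑ j, f k j * v j ^ 2) i
        + -(E i * (hv * ∑ j, f i j)) := by
    rw [Finset.sum_add_distrib, mul_add, h1, h2]
  linear_combination -Δt * key
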